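/- For all reals α, β with 0 < α < 1 and 0 < β < min(2α, 2(1-α)), the limit as N → ∞ of (1/N)·ln( C(N - ⌊αN⌋, ⌊⌊βN⌋/2⌋)·C(⌊αN⌋ - 1, ⌈⌊βN⌋/2⌉ - 1) / C(N, ⌊αN⌋) ) exists and equals f^FF(α,β) = (1-α)·H(β/(2(1-α))) + α·H(β/(2α)) - H(α). -/

import Mathlib

open Filter

/-- Binary entropy function with natural logarithm (`Real.log 0 = 0` gives `H 0 = H 1 = 0`). -/
noncomputable def H (x : ℝ) : ℝ := -x * Real.log x - (1 - x) * Real.log (1 - x)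

/-- Asymptotic input-output weight distribution of the 2-state feedforward encoder `[3]_8`. -/
noncomputable def fFF (α β : ℝ) : ℝ :=
  (1 - α) * H (β / (2 * (1 - α))) + α * H (β / (2 * α)) - H α


lemma log_ratio_bounds {x : ℝ} (hx : 1 ≤ x) :
    x * (Real.log (x+1) - Real.log x) ≤ 1 ∧
    1 ≤ (x+1) * (Real.log (x+1) - Real.log x) := by
  have hx0 : 0 < x := by linarith
  have h1 : Real.log (x+1) - Real.log x = Real.log ((x+1)/x) := by
    rw [Real.log_div (by linarith) (by linarith)]
  have hy : 0 < (x+1)/x := by positivity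
  have hub : Real.log ((x+1)/x) ≤ (x+1)/x - 1 := Real.log_le_sub_one_of_pos hy
  have hlb : 1 - x/(x+1) ≤ Real.log ((x+1)/x) := by
    have := Real.log_le_sub_one_of_pos (show (0:ℝ) < x/(x+1) by positivity)
    have hinv : Real.log (x/(x+1)) = - Real.log ((x+1)/x) := by
      rw [Real.log_div (by linarith) (by linarith), Real.log_div (by linarith) (by linarith)]
      ring
    rw [hinv] at this; linarith
  constructor
  · rw [h1]
    have h3 : x * Real.log ((x+1)/x) ≤ x * ((x+1)/x - 1) :=
      mul_le_mul_of_nonneg_left hub (le_of_lt hx0)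
    have h4 : x * ((x+1)/x - 1) = 1 := by field_simp; ring
    linarith
  · rw [h1]
    have h2 : 1 - x/(x+1) = 1/(x+1) := by field_simp; ring
    rw [h2] at hlb
    have h3 : (x+1) * (1/(x+1)) ≤ (x+1) * Real.log ((x+1)/x) :=
      mul_le_mul_of_nonneg_left hlb (by linarith)
    have h4 : (x+1) * (1/(x+1)) = 1 := by field_simp
    linarith

lemma log_factorial_bounds : ∀ n : ℕ, 1 ≤ n →
    (n:ℝ) * Real.log n - n + 1 ≤ Real.log (n.factorial) ∧
    Real.log (n.factorial) ≤ (n:ℝ) * Real.log n - n + 1 + Real.log n := by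
  intro n hn
  induction n, hn using Nat.le_induction with
  | base => simp [Nat.factorial]
  | succ n hn ih =>
    have hx : (1:ℝ) ≤ (n:ℝ) := by exact_mod_cast hn
    obtain ⟨hkey1, hkey2⟩ := log_ratio_bounds hx
    have hfact : ((n+1 : ℕ).factorial : ℝ) = (n+1 : ℝ) * (n.factorial : ℝ) := by
      push_cast [Nat.factorial_succ]; ring
    have hpos : (0:ℝ) < (n.factorial : ℝ) := by exact_mod_cast n.factorial_pos
    have hlog : Real.log ((n+1:ℕ).factorial) = Real.log ((n:ℝ)+1) + Real.log (n.factorial) := by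
      rw [hfact, Real.log_mul (by linarith) (ne_of_gt hpos)]
    push_cast
    rw [hlog]
    constructor
    · nlinarith [ih.1]
    · nlinarith [ih.2]


lemma tendsto_log_div_nat : Tendsto (fun N : ℕ => Real.log N / N) atTop (nhds 0) :=
  (Real.isLittleO_log_id_atTop.tendsto_div_nhds_zero).comp tendsto_natCast_atTop_atTop

lemma eps_tendsto (m : ℕ → ℕ) (c : ℝ) (hc : 0 < c)
    (hm : Tendsto (fun N => (m N : ℝ)/N) atTop (nhds c)) :
    Tendsto (fun N : ℕ => (1/(N:ℝ)) *
      (Real.log ((m N).factorial) - ((m N : ℝ) * Real.log (m N) - (m N : ℝ))))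
      atTop (nhds 0) := by
  -- eventually 1 ≤ m N and m N ≤ (c+1) N
  have h1 : ∀ᶠ N : ℕ in atTop, c/2 < (m N : ℝ)/N :=
    hm.eventually_const_lt (by linarith)
  have h2 : ∀ᶠ N : ℕ in atTop, (m N : ℝ)/N < c + 1 :=
    hm.eventually_lt_const (by linarith)
  have h3 : ∀ᶠ N : ℕ in atTop, (2/c : ℝ) ≤ (N:ℝ) :=
    tendsto_natCast_atTop_atTop.eventually_ge_atTop _
  have h4 : ∀ᶠ N : ℕ in atTop, 1 ≤ N := eventually_ge_atTop 1
  have key : ∀ᶠ N : ℕ in atTop,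
      (1/(N:ℝ)) * (Real.log ((m N).factorial) - ((m N : ℝ) * Real.log (m N) - (m N : ℝ)))
        ∈ Set.Icc (0 : ℝ) ((1 + Real.log (c+1))/N + Real.log N / N) := by
    filter_upwards [h1, h2, h3, h4] with N hN1 hN2 hN3 hN4
    have hNpos : (0:ℝ) < N := by
      have : (1:ℕ) ≤ N := hN4; exact_mod_cast Nat.lt_of_lt_of_le Nat.zero_lt_one this
    have hm1 : (1:ℝ) ≤ (m N : ℝ) := by
      have : c/2 * N < (m N : ℝ) := by
        rw [lt_div_iff₀ hNpos] at hN1; linarith [hN1]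
      have h22 : (2:ℝ)/c * (c/2) = 1 := by field_simp
      nlinarith
    have hm1' : 1 ≤ m N := by exact_mod_cast hm1
    have hmub : (m N : ℝ) ≤ (c+1) * N := by
      rw [div_lt_iff₀ hNpos] at hN2; linarith
    obtain ⟨hlb, hub⟩ := log_factorial_bounds (m N) hm1'
    constructor
    · apply mul_nonneg (by positivity); linarith
    · have hlogm : Real.log (m N) ≤ Real.log (c+1) + Real.log N := by
        calc Real.log (m N) ≤ Real.log ((c+1)*N) :=
              Real.log_le_log (by linarith) hmub
          _ = Real.log (c+1) + Real.log N := Real.log_mul (by linarith) (ne_of_gt hNpos)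
      have : Real.log ((m N).factorial) - ((m N : ℝ) * Real.log (m N) - (m N : ℝ))
          ≤ 1 + Real.log (c+1) + Real.log N := by linarith
      calc (1/(N:ℝ)) * (Real.log ((m N).factorial) - ((m N : ℝ) * Real.log (m N) - (m N : ℝ)))
          ≤ (1/(N:ℝ)) * (1 + Real.log (c+1) + Real.log N) := by
            apply mul_le_mul_of_nonneg_left this (by positivity)
        _ = (1 + Real.log (c+1))/N + Real.log N / N := by ring
  have hub : Tendsto (fun N : ℕ => (1 + Real.log (c+1))/N + Real.log N / N) atTop (nhds 0) := by
    have ha : Tendsto (fun N : ℕ => (1 + Real.log (c+1))/N) atTop (nhds 0) :=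
      tendsto_const_nhds.div_atTop tendsto_natCast_atTop_atTop
    simpa using ha.add tendsto_log_div_nat
  have hlb : Tendsto (fun _ : ℕ => (0:ℝ)) atTop (nhds 0) := tendsto_const_nhds
  exact tendsto_of_tendsto_of_tendsto_of_le_of_le' hlb hub
    (key.mono fun N h => h.1) (key.mono fun N h => h.2)


lemma choose_log_asymp (a b : ℕ → ℕ) (c d : ℝ) (hd : 0 < d) (hdc : d < c)
    (ha : Tendsto (fun N : ℕ => (a N : ℝ)/N) atTop (nhds c))
    (hb : Tendsto (fun N : ℕ => (b N : ℝ)/N) atTop (nhds d)) :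
    Tendsto (fun N : ℕ => (1/(N:ℝ)) * Real.log ((a N).choose (b N))) atTop
      (nhds (c * Real.log c - d * Real.log d - (c - d) * Real.log (c - d))) := by
  set e : ℕ → ℕ := fun N => a N - b N with he
  have hcd : 0 < c - d := by linarith
  -- eventual facts
  have hEb : ∀ᶠ N : ℕ in atTop, d/2 < (b N : ℝ)/N := hb.eventually_const_lt (by linarith)
  have hEab : ∀ᶠ N : ℕ in atTop, (c-d)/2 < (a N : ℝ)/N - (b N : ℝ)/N :=
    (ha.sub hb).eventually_const_lt (by linarith)
  have hEN : ∀ᶠ N : ℕ in atTop, (2/d : ℝ) ≤ (N:ℝ) ∧ (2/(c-d) : ℝ) ≤ (N:ℝ) ∧ 1 ≤ (N:ℝ) := by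
    filter_upwards [tendsto_natCast_atTop_atTop.eventually_ge_atTop (2/d : ℝ),
      tendsto_natCast_atTop_atTop.eventually_ge_atTop (2/(c-d) : ℝ),
      tendsto_natCast_atTop_atTop.eventually_ge_atTop (1 : ℝ)] with N h1 h2 h3
    exact ⟨h1, h2, h3⟩
  have hGood : ∀ᶠ N : ℕ in atTop, 1 ≤ b N ∧ b N < a N ∧ 1 ≤ e N ∧ (1:ℝ) ≤ (N:ℝ) := by
    filter_upwards [hEb, hEab, hEN] with N h1 h2 ⟨h3, h4, h5⟩
    have hNpos : (0:ℝ) < N := by linarith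
    have hb1 : (1:ℝ) < (b N : ℝ) := by
      rw [lt_div_iff₀ hNpos] at h1
      have : d/2 * (2/d) ≤ d/2 * N := by
        apply mul_le_mul_of_nonneg_left h3 (by positivity)
      have hdd : d/2 * (2/d) = 1 := by field_simp
      linarith
    have hab1 : (1:ℝ) < (a N : ℝ) - (b N : ℝ) := by
      rw [div_sub_div_same] at h2
      rw [lt_div_iff₀ hNpos] at h2
      have : (c-d)/2 * (2/(c-d)) ≤ (c-d)/2 * N := by
        apply mul_le_mul_of_nonneg_left h4 (by positivity)
      have hdd : (c-d)/2 * (2/(c-d)) = 1 := by field_simp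
      linarith
    have hba : b N < a N := by
      have : (b N : ℝ) < (a N : ℝ) := by linarith
      exact_mod_cast this
    refine ⟨?_, hba, ?_, h5⟩
    · exact_mod_cast hb1.le
    · simp only [he]; omega
  -- e ratio tendsto
  have hee : Tendsto (fun N : ℕ => (e N : ℝ)/N) atTop (nhds (c - d)) := by
    apply (ha.sub hb).congr'
    filter_upwards [hGood] with N ⟨_, hba, _, _⟩
    rw [div_sub_div_same]
    congr 1
    have : (e N : ℝ) = (a N : ℝ) - (b N : ℝ) := by
      simp only [he]; push_cast [Nat.cast_sub hba.le]; ring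
    rw [this]
  -- the target function eventually equals a nicer expression
  have hEq : (fun N : ℕ => (1/(N:ℝ)) * Real.log ((a N).choose (b N))) =ᶠ[atTop]
      fun N : ℕ =>
        ((1/(N:ℝ)) * (Real.log ((a N).factorial) - ((a N : ℝ) * Real.log (a N) - (a N : ℝ)))
        - (1/(N:ℝ)) * (Real.log ((b N).factorial) - ((b N : ℝ) * Real.log (b N) - (b N : ℝ)))
        - (1/(N:ℝ)) * (Real.log ((e N).factorial) - ((e N : ℝ) * Real.log (e N) - (e N : ℝ))))
        + (((a N : ℝ)/N) * Real.log ((a N : ℝ)/N)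
          - ((b N : ℝ)/N) * Real.log ((b N : ℝ)/N)
          - ((e N : ℝ)/N) * Real.log ((e N : ℝ)/N)) := by
    filter_upwards [hGood] with N ⟨hb1, hba, he1, hN1⟩
    have hNpos : (0:ℝ) < N := by linarith
    have hA : (0:ℝ) < (a N : ℝ) := by
      have : 1 ≤ a N := le_trans hb1 hba.le
      exact_mod_cast Nat.lt_of_lt_of_le Nat.zero_lt_one this
    have hB : (0:ℝ) < (b N : ℝ) := by exact_mod_cast Nat.lt_of_lt_of_le Nat.zero_lt_one hb1
    have hE : (0:ℝ) < (e N : ℝ) := by exact_mod_cast Nat.lt_of_lt_of_le Nat.zero_lt_one he1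
    -- log of choose
    have hkey : (a N).choose (b N) * (b N).factorial * (e N).factorial = (a N).factorial :=
      Nat.choose_mul_factorial_mul_factorial hba.le
    have hCpos : 0 < (a N).choose (b N) := Nat.choose_pos hba.le
    have hlogC : Real.log ((a N).choose (b N)) =
        Real.log ((a N).factorial) - Real.log ((b N).factorial) - Real.log ((e N).factorial) := by
      have := congrArg (fun k : ℕ => Real.log k) hkey
      rw [show ((((a N).choose (b N) * (b N).factorial * (e N).factorial : ℕ)) : ℝ) =
        (((b N).factorial : ℝ) * ((e N).factorial : ℝ)) * ((a N).choose (b N) : ℝ) by push_cast; ring,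
        Real.log_mul (by positivity) (by exact_mod_cast hCpos.ne'),
        Real.log_mul (by positivity) (by positivity)] at this
      linarith [this]
    -- log splits
    have hsplit : ∀ m : ℝ, 0 < m → Real.log m = Real.log (m/N) + Real.log N := by
      intro m hm
      rw [Real.log_div hm.ne' hNpos.ne']; ring
    have hAE : (a N : ℝ) = (b N : ℝ) + (e N : ℝ) := by
      simp only [he]; push_cast [Nat.cast_sub hba.le]; ring
    rw [hlogC, hsplit _ hA, hsplit _ hB, hsplit _ hE, hAE]
    field_simp
    ring
  rw [show c * Real.log c - d * Real.log d - (c - d) * Real.log (c - d) =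
      ((0 : ℝ) - 0 - 0) + (c * Real.log c - d * Real.log d - (c - d) * Real.log (c - d)) by ring]
  apply Tendsto.congr' hEq.symm
  refine Tendsto.add ?_ ?_
  · exact ((eps_tendsto a c (by linarith) ha).sub (eps_tendsto b d hd hb)).sub
      (eps_tendsto e (c-d) hcd hee)
  · have hφ : ∀ (f : ℕ → ℕ) (x : ℝ), Tendsto (fun N : ℕ => (f N : ℝ)/N) atTop (nhds x) →
        Tendsto (fun N : ℕ => ((f N : ℝ)/N) * Real.log ((f N : ℝ)/N)) atTop
          (nhds (x * Real.log x)) := by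
      intro f x hf
      exact (Real.continuous_mul_log.tendsto x).comp hf
    exact ((hφ a c ha).sub (hφ b d hb)).sub (hφ e (c-d) hee)


lemma ratio_tendsto_of_close (f : ℕ → ℕ) (c C : ℝ) (hC : 0 ≤ C)
    (h : ∀ᶠ N : ℕ in atTop, |(f N : ℝ) - c * N| ≤ C) :
    Tendsto (fun N : ℕ => (f N : ℝ)/N) atTop (nhds c) := by
  have h0 : Tendsto (fun N : ℕ => ((f N : ℝ) - c*N)/N) atTop (nhds 0) := by
    refine squeeze_zero_norm' (a := fun N : ℕ => C / N) ?_
      (tendsto_const_nhds.div_atTop tendsto_natCast_atTop_atTop)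
    filter_upwards [h, eventually_ge_atTop 1] with N hN hN1
    have hNpos : (0:ℝ) < N := by exact_mod_cast hN1
    rw [norm_div, Real.norm_natCast, Real.norm_eq_abs]
    gcongr
  have h1 : Tendsto (fun N : ℕ => c + ((f N : ℝ) - c*N)/N) atTop (nhds c) := by
    simpa using tendsto_const_nhds.add h0
  apply h1.congr'
  filter_upwards [eventually_ge_atTop 1] with N hN1
  have hNpos : (0:ℝ) < N := by exact_mod_cast hN1
  field_simp
  ring

section Ratios
variable {α β : ℝ}

lemma floor_ratio (hα0 : 0 < α) :
    Tendsto (fun N : ℕ => ((⌊α * (N:ℝ)⌋₊ : ℝ))/N) atTop (nhds α) := by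
  apply ratio_tendsto_of_close _ _ 1 one_pos.le
  filter_upwards with N
  have h1 : (⌊α * (N:ℝ)⌋₊ : ℝ) ≤ α * N := Nat.floor_le (by positivity)
  have h2 : α * (N:ℝ) - 1 < ⌊α * (N:ℝ)⌋₊ := Nat.sub_one_lt_floor _
  rw [abs_le]; constructor <;> linarith

lemma sub_floor_ratio (hα0 : 0 < α) (hα1 : α < 1) :
    Tendsto (fun N : ℕ => ((N - ⌊α * (N:ℝ)⌋₊ : ℕ) : ℝ)/N) atTop (nhds (1 - α)) := by
  apply ratio_tendsto_of_close _ _ 1 one_pos.le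
  filter_upwards with N
  have h1 : (⌊α * (N:ℝ)⌋₊ : ℝ) ≤ α * N := Nat.floor_le (by positivity)
  have h2 : α * (N:ℝ) - 1 < ⌊α * (N:ℝ)⌋₊ := Nat.sub_one_lt_floor _
  have hle : ⌊α * (N:ℝ)⌋₊ ≤ N := by
    have : (⌊α * (N:ℝ)⌋₊ : ℝ) ≤ N := by nlinarith [(Nat.cast_nonneg N : (0:ℝ) ≤ (N:ℝ))]
    exact_mod_cast this
  rw [Nat.cast_sub hle, abs_le]; constructor <;> [skip; skip] <;> push_cast <;> linarith

lemma floor_sub_one_ratio (hα0 : 0 < α) :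
    Tendsto (fun N : ℕ => ((⌊α * (N:ℝ)⌋₊ - 1 : ℕ) : ℝ)/N) atTop (nhds α) := by
  apply ratio_tendsto_of_close _ _ 2 (by norm_num)
  filter_upwards [tendsto_natCast_atTop_atTop.eventually_ge_atTop (1/α : ℝ)] with N hN
  have h1 : (⌊α * (N:ℝ)⌋₊ : ℝ) ≤ α * N := Nat.floor_le (by positivity)
  have h2 : α * (N:ℝ) - 1 < ⌊α * (N:ℝ)⌋₊ := Nat.sub_one_lt_floor _
  have hα1N : (1:ℝ) ≤ α * N := by
    rw [div_le_iff₀ hα0] at hN; linarith [hN]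
  have hge : 1 ≤ ⌊α * (N:ℝ)⌋₊ := by
    exact Nat.le_floor (by exact_mod_cast hα1N)
  rw [Nat.cast_sub hge, abs_le]; constructor <;> push_cast <;> linarith

lemma half_floor_ratio (hβ0 : 0 < β) :
    Tendsto (fun N : ℕ => ((⌊β * (N:ℝ)⌋₊ / 2 : ℕ) : ℝ)/N) atTop (nhds (β/2)) := by
  apply ratio_tendsto_of_close _ _ 2 (by norm_num)
  filter_upwards with N
  set m := ⌊β * (N:ℝ)⌋₊ with hm
  have h1 : (m : ℝ) ≤ β * N := Nat.floor_le (by positivity)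
  have h2 : β * (N:ℝ) - 1 < m := Nat.sub_one_lt_floor _
  have hq : 2 * (m / 2) ≤ m ∧ m ≤ 2 * (m / 2) + 1 := by omega
  have hq1 : (2:ℝ) * ((m/2 : ℕ) : ℝ) ≤ m := by exact_mod_cast hq.1
  have hq2 : (m:ℝ) ≤ 2 * ((m/2 : ℕ) : ℝ) + 1 := by exact_mod_cast hq.2
  rw [abs_le]; constructor <;> linarith

lemma half_floor_ratio' (hβ0 : 0 < β) :
    Tendsto (fun N : ℕ => (((⌊β * (N:ℝ)⌋₊ + 1) / 2 - 1 : ℕ) : ℝ)/N) atTop (nhds (β/2)) := by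
  apply ratio_tendsto_of_close _ _ 3 (by norm_num)
  filter_upwards with N
  set m := ⌊β * (N:ℝ)⌋₊ with hm
  have h1 : (m : ℝ) ≤ β * N := Nat.floor_le (by positivity)
  have h2 : β * (N:ℝ) - 1 < m := Nat.sub_one_lt_floor _
  have hq : 2 * ((m+1)/2 - 1) ≤ m + 1 ∧ m ≤ 2 * ((m+1)/2 - 1) + 2 := by omega
  have hq1 : (2:ℝ) * (((m+1)/2 - 1 : ℕ) : ℝ) ≤ (m:ℝ) + 1 := by exact_mod_cast hq.1
  have hq2 : (m:ℝ) ≤ 2 * (((m+1)/2 - 1 : ℕ) : ℝ) + 2 := by exact_mod_cast hq.2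
  rw [abs_le]; constructor <;> linarith

lemma id_ratio : Tendsto (fun N : ℕ => ((N : ℕ) : ℝ)/N) atTop (nhds 1) := by
  apply ratio_tendsto_of_close _ _ 0 le_rfl
  filter_upwards with N
  simp

end Ratios

lemma g_eq (c d : ℝ) (hd : 0 < d) (hdc : d < c) :
    c * H (d/c) = c * Real.log c - d * Real.log d - (c - d) * Real.log (c - d) := by
  have hc : 0 < c := lt_trans hd hdc
  have h1 : (1:ℝ) - d/c = (c - d)/c := by field_simp
  unfold H
  rw [h1, Real.log_div hd.ne' hc.ne', Real.log_div (by linarith) hc.ne']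
  field_simp
  ring


theorem stmt_7 (α β : ℝ) (hα0 : 0 < α) (hα1 : α < 1)
    (hβ0 : 0 < β) (hβu : β < min (2 * α) (2 * (1 - α))) :
    Tendsto (fun N : ℕ =>
      (1 / (N : ℝ)) * Real.log (
        ((Nat.choose (N - ⌊α * (N : ℝ)⌋₊) (⌊β * (N : ℝ)⌋₊ / 2) *
          Nat.choose (⌊α * (N : ℝ)⌋₊ - 1) ((⌊β * (N : ℝ)⌋₊ + 1) / 2 - 1) : ℕ) : ℝ) /
        ((Nat.choose N ⌊α * (N : ℝ)⌋₊ : ℕ) : ℝ)))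
      atTop (nhds (fFF α β)) := by
  have hβα : β < 2*α := lt_of_lt_of_le hβu (min_le_left _ _)
  have hβ1' : β < 2*(1-α) := lt_of_lt_of_le hβu (min_le_right _ _)
  have hβ2α : β/2 < α := by linarith
  have hβ21α : β/2 < 1 - α := by linarith
  have hβ20 : 0 < β/2 := by linarith
  have T1 := choose_log_asymp (fun N => N - ⌊α * (N:ℝ)⌋₊) (fun N => ⌊β * (N:ℝ)⌋₊ / 2)
      (1-α) (β/2) hβ20 hβ21α (sub_floor_ratio hα0 hα1) (half_floor_ratio hβ0)
  have T2 := choose_log_asymp (fun N => ⌊α * (N:ℝ)⌋₊ - 1) (fun N => (⌊β * (N:ℝ)⌋₊ + 1)/2 - 1)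
      α (β/2) hβ20 hβ2α (floor_sub_one_ratio hα0) (half_floor_ratio' hβ0)
  have T3 := choose_log_asymp (fun N => N) (fun N => ⌊α * (N:ℝ)⌋₊) 1 α hα0 hα1
      id_ratio (floor_ratio hα0)
  -- eventual comparisons
  have hcomp : ∀ (a b : ℕ → ℕ) (c d : ℝ), d < c →
      Tendsto (fun N : ℕ => (a N:ℝ)/N) atTop (nhds c) →
      Tendsto (fun N : ℕ => (b N:ℝ)/N) atTop (nhds d) →
      ∀ᶠ N : ℕ in atTop, b N ≤ a N := by
    intro a b c d hdc ha hb
    filter_upwards [(ha.sub hb).eventually_const_lt (show (0:ℝ) < c - d by linarith),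
      eventually_ge_atTop 1] with N h hN1
    have hNpos : (0:ℝ) < N := by exact_mod_cast hN1
    rw [div_sub_div_same, lt_div_iff₀ hNpos] at h
    have : (b N:ℝ) ≤ (a N:ℝ) := by linarith
    exact_mod_cast this
  have hP1 := hcomp _ _ _ _ hβ21α (sub_floor_ratio hα0 hα1) (half_floor_ratio hβ0)
  have hP2 := hcomp _ _ _ _ hβ2α (floor_sub_one_ratio hα0) (half_floor_ratio' hβ0)
  have hP3 := hcomp _ _ _ _ hα1 id_ratio (floor_ratio hα0)
  have hval : fFF α β =
      ((1-α) * Real.log (1-α) - (β/2) * Real.log (β/2) - ((1-α) - β/2) * Real.log ((1-α) - β/2)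
      + (α * Real.log α - (β/2) * Real.log (β/2) - (α - β/2) * Real.log (α - β/2)))
      - (1 * Real.log 1 - α * Real.log α - (1 - α) * Real.log (1 - α)) := by
    rw [← g_eq (1-α) (β/2) hβ20 hβ21α, ← g_eq α (β/2) hβ20 hβ2α, ← g_eq 1 α hα0 hα1]
    unfold fFF
    rw [show β/(2*(1-α)) = (β/2)/(1-α) from (div_div β 2 (1-α)).symm,
      show β/(2*α) = (β/2)/α from (div_div β 2 α).symm,
      show (α:ℝ)/1 = α from div_one α, one_mul]
  rw [hval]
  apply ((T1.add T2).sub T3).congr'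
  filter_upwards [hP1, hP2, hP3] with N h1 h2 h3
  have c1pos : (0:ℝ) < ((N - ⌊α * (N:ℝ)⌋₊).choose (⌊β * (N:ℝ)⌋₊ / 2) : ℝ) := by
    exact_mod_cast Nat.choose_pos h1
  have c2pos : (0:ℝ) < ((⌊α * (N:ℝ)⌋₊ - 1).choose ((⌊β * (N:ℝ)⌋₊ + 1)/2 - 1) : ℝ) := by
    exact_mod_cast Nat.choose_pos h2
  have c3pos : (0:ℝ) < (N.choose ⌊α * (N:ℝ)⌋₊ : ℝ) := by
    exact_mod_cast Nat.choose_pos h3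
  rw [show (((N - ⌊α * (N:ℝ)⌋₊).choose (⌊β * (N:ℝ)⌋₊ / 2) *
      (⌊α * (N:ℝ)⌋₊ - 1).choose ((⌊β * (N:ℝ)⌋₊ + 1)/2 - 1) : ℕ) : ℝ) =
      ((N - ⌊α * (N:ℝ)⌋₊).choose (⌊β * (N:ℝ)⌋₊ / 2) : ℝ) *
      ((⌊α * (N:ℝ)⌋₊ - 1).choose ((⌊β * (N:ℝ)⌋₊ + 1)/2 - 1) : ℝ) by push_cast; ring,
    Real.log_div (by positivity) c3pos.ne', Real.log_mul c1pos.ne' c2pos.ne']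
  ring
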